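/- Let p ≥ 2 be an integer and C ≥ 1. Let λ ∈ ℂ with |λ| ≤ 1, let μ, μ', u, u' be complex numbers, and let R ∈ ℂ. Assume (i) |R| ≤ C·max{1, |λ|^(1/(2p))·|μ|^(1−1/p), |λ|^(1/(2p))·|μ'|^(1−1/p)}, and (ii) for every pair (v, ν) with v ∈ {u, u'} and ν ∈ {μ, μ'} one has v ≠ ν and 1/|v − ν| ≤ C·min(1/(1+|v|), 1/(1+|ν|)). Then |R|·( 1/(|u−μ|·|u'−μ|·|u−μ'|) + 1/(|u−μ|·|u−μ'|·|u'−μ'|) ) ≤ 2·C⁴·(1+|u|)^(−(1+1/p))·(1+|u'|)^(−1). -/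

import Mathlib

private lemma corner_aux_split (m a b s t : ℝ) (hm : 0 < m) (hma : m ≤ a) (hmb : m ≤ b)
    (hs : 0 ≤ s) (ht : 0 ≤ t) (hst : s + t = 1) : m ≤ a ^ s * b ^ t := by
  calc m = m ^ s * m ^ t := by rw [← Real.rpow_add hm, hst, Real.rpow_one]
    _ ≤ a ^ s * b ^ t :=
      mul_le_mul (Real.rpow_le_rpow hm.le hma hs) (Real.rpow_le_rpow hm.le hmb ht)
        (Real.rpow_nonneg hm.le t) (Real.rpow_nonneg (hm.le.trans hma) s)

/-- Eigenvalue form of the bound on the contour-corner operators: given the resolvent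
bound on `R` and the contour bounds on the `1/|v−ν|` factors, the corner-operator
eigenvalue is bounded by `2·C⁴·(1+|u|)^{−(1+1/p)}·(1+|u'|)^{−1}`. -/
theorem corner_operator_bound
    (p : ℕ) (hp : 2 ≤ p) (C : ℝ) (hC : 1 ≤ C)
    (lam : ℂ) (hlam : ‖lam‖ ≤ 1)
    (mu mu' u u' R : ℂ)
    (hR : ‖R‖ ≤
      C * max (max 1
        (‖lam‖ ^ (1 / (2 * (p:ℝ))) * ‖mu‖ ^ (1 - 1 / (p:ℝ))))
        (‖lam‖ ^ (1 / (2 * (p:ℝ))) * ‖mu'‖ ^ (1 - 1 / (p:ℝ))))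
    (hres : ∀ v ∈ ({u, u'} : Set ℂ), ∀ nu ∈ ({mu, mu'} : Set ℂ),
      v ≠ nu ∧ 1 / ‖v - nu‖ ≤
        C * min (1 / (1 + ‖v‖)) (1 / (1 + ‖nu‖))) :
    ‖R‖ *
      (1 / (‖u - mu‖ * ‖u' - mu‖ * ‖u - mu'‖) +
       1 / (‖u - mu‖ * ‖u - mu'‖ * ‖u' - mu'‖)) ≤
    2 * C ^ 4 * (1 + ‖u‖) ^ (-(1 + 1 / (p:ℝ))) *
      (1 + ‖u'‖) ^ (-(1:ℝ)) := by
  have hC0 : (0:ℝ) ≤ C := by linarith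
  have hpR : (2:ℝ) ≤ (p:ℝ) := by exact_mod_cast hp
  set s : ℝ := 1 / (p:ℝ) with hs_def
  set t : ℝ := 1 - 1 / (p:ℝ) with ht_def
  have hs0 : 0 < s := by rw [hs_def]; positivity
  have hs1 : s ≤ 1/2 := by
    rw [hs_def]
    rw [div_le_div_iff₀ (by linarith) (by norm_num)]
    linarith
  have ht0 : (0:ℝ) ≤ t := by rw [ht_def, hs_def] at *; linarith
  have hst : s + t = 1 := by rw [ht_def, hs_def]; ring
  -- distances
  obtain ⟨hne1, hb1⟩ := hres u (by simp) mu (by simp)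
  obtain ⟨hne2, hb2⟩ := hres u' (by simp) mu (by simp)
  obtain ⟨hne3, hb3⟩ := hres u (by simp) mu' (by simp)
  obtain ⟨hne4, hb4⟩ := hres u' (by simp) mu' (by simp)
  set d1 := ‖u - mu‖
  set d2 := ‖u' - mu‖
  set d3 := ‖u - mu'‖
  set d4 := ‖u' - mu'‖
  have hd1 : 0 < d1 := norm_pos_iff.mpr (sub_ne_zero.mpr hne1)
  have hd2 : 0 < d2 := norm_pos_iff.mpr (sub_ne_zero.mpr hne2)
  have hd3 : 0 < d3 := norm_pos_iff.mpr (sub_ne_zero.mpr hne3)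
  have hd4 : 0 < d4 := norm_pos_iff.mpr (sub_ne_zero.mpr hne4)
  set au := ‖u‖
  set au' := ‖u'‖
  set amu := ‖mu‖
  set amu' := ‖mu'‖
  have hau : 0 ≤ au := norm_nonneg u
  have hau' : 0 ≤ au' := norm_nonneg u'
  have hamu : 0 ≤ amu := norm_nonneg mu
  have hamu' : 0 ≤ amu' := norm_nonneg mu'
  have hu1 : (0:ℝ) < 1 + au := by linarith
  have hu'1 : (0:ℝ) < 1 + au' := by linarith
  have hmu1 : (0:ℝ) < 1 + amu := by linarith
  have hmu'1 : (0:ℝ) < 1 + amu' := by linarith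
  set X : ℝ := (1 + au) ^ (-(1 + s)) with hX_def
  have hXpos : 0 < X := Real.rpow_pos_of_pos hu1 _
  -- simplified resolvent bound
  have hL : ‖lam‖ ^ (1 / (2 * (p:ℝ))) ≤ 1 :=
    Real.rpow_le_one (norm_nonneg lam) hlam (by positivity)
  have hRle : ‖R‖ ≤ C * max (max 1 (amu ^ t)) (amu' ^ t) := by
    refine hR.trans (mul_le_mul_of_nonneg_left ?_ hC0)
    exact max_le_max (max_le_max le_rfl
      (mul_le_of_le_one_left (Real.rpow_nonneg hamu t) hL))
      (mul_le_of_le_one_left (Real.rpow_nonneg hamu' t) hL)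
  -- rpow identities
  have hX2 : (1/(1+au)) ^ s * (1/(1+au)) = X := by
    rw [hX_def, show -(1+s) = -s + (-1) by ring, Real.rpow_add hu1, Real.rpow_neg_one,
      one_div, Real.inv_rpow hu1.le, ← Real.rpow_neg hu1.le]
  have hX1 : (1/(1+au)) * (1/(1+au)) ≤ X := by
    have e2 : (1+au) ^ (-(2:ℝ)) = (1/(1+au)) * (1/(1+au)) := by
      rw [show (-(2:ℝ)) = -1 + -1 by norm_num, Real.rpow_add hu1, Real.rpow_neg_one,
        one_div]
    rw [← e2, hX_def]
    exact Real.rpow_le_rpow_of_exponent_le (by linarith) (by linarith)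
  -- key claim
  have key : ‖R‖ * (1/d1) * (1/d3) ≤ C^3 * X := by
    have b1' : 1/d1 ≤ C * (1/(1+au)) :=
      hb1.trans (mul_le_mul_of_nonneg_left (min_le_left _ _) hC0)
    have b3' : 1/d3 ≤ C * (1/(1+au)) :=
      hb3.trans (mul_le_mul_of_nonneg_left (min_le_left _ _) hC0)
    rcases le_total (amu' ^ t) (max 1 (amu ^ t)) with hM | hM
    · rw [max_eq_left hM] at hRle
      rcases le_total (amu ^ t) 1 with hM2 | hM2
      · rw [max_eq_left hM2, mul_one] at hRle
        calc ‖R‖ * (1/d1) * (1/d3)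
            ≤ (C * (C * (1/(1+au)))) * (C * (1/(1+au))) := by
              refine mul_le_mul (mul_le_mul hRle b1' (by positivity) hC0) b3'
                (by positivity) (by positivity)
          _ = C^3 * ((1/(1+au)) * (1/(1+au))) := by ring
          _ ≤ C^3 * X := mul_le_mul_of_nonneg_left hX1 (by positivity)
      · rw [max_eq_right hM2] at hRle
        -- |R| ≤ C * amu^t
        have hmin : 0 < min (1/(1+au)) (1/(1+amu)) :=
          lt_min (by positivity) (by positivity)
        have hsplit : min (1/(1+au)) (1/(1+amu)) ≤ (1/(1+au))^s * (1/(1+amu))^t :=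
          corner_aux_split _ _ _ _ _ hmin (min_le_left _ _) (min_le_right _ _)
            hs0.le ht0 hst
        have b1'' : 1/d1 ≤ C * ((1/(1+au))^s * (1/(1+amu))^t) :=
          hb1.trans (mul_le_mul_of_nonneg_left hsplit hC0)
        have hfrac : amu ^ t * (1/(1+amu))^t ≤ 1 := by
          rw [← Real.mul_rpow hamu (by positivity)]
          refine Real.rpow_le_one (by positivity) ?_ ht0
          rw [mul_one_div]
          exact div_le_one_of_le₀ (by linarith) (by linarith)
        calc ‖R‖ * (1/d1) * (1/d3)
            ≤ (C * amu ^ t * (C * ((1/(1+au))^s * (1/(1+amu))^t))) * (C * (1/(1+au))) := by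
              refine mul_le_mul (mul_le_mul hRle b1'' (by positivity) (by positivity)) b3'
                (by positivity) (by positivity)
          _ = C^3 * (amu ^ t * (1/(1+amu))^t) * ((1/(1+au))^s * (1/(1+au))) := by ring
          _ ≤ C^3 * 1 * ((1/(1+au))^s * (1/(1+au))) := by
              refine mul_le_mul_of_nonneg_right (mul_le_mul_of_nonneg_left hfrac
                (by positivity)) (by positivity)
          _ = C^3 * X := by rw [mul_one, hX2]
    · rw [max_eq_right hM] at hRle
      -- |R| ≤ C * amu'^t
      have hmin : 0 < min (1/(1+au)) (1/(1+amu')) :=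
        lt_min (by positivity) (by positivity)
      have hsplit : min (1/(1+au)) (1/(1+amu')) ≤ (1/(1+au))^s * (1/(1+amu'))^t :=
        corner_aux_split _ _ _ _ _ hmin (min_le_left _ _) (min_le_right _ _)
          hs0.le ht0 hst
      have b3'' : 1/d3 ≤ C * ((1/(1+au))^s * (1/(1+amu'))^t) :=
        hb3.trans (mul_le_mul_of_nonneg_left hsplit hC0)
      have hfrac : amu' ^ t * (1/(1+amu'))^t ≤ 1 := by
        rw [← Real.mul_rpow hamu' (by positivity)]
        refine Real.rpow_le_one (by positivity) ?_ ht0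
        rw [mul_one_div]
        exact div_le_one_of_le₀ (by linarith) (by linarith)
      calc ‖R‖ * (1/d1) * (1/d3)
          ≤ (C * amu' ^ t * (C * (1/(1+au)))) * (C * ((1/(1+au))^s * (1/(1+amu'))^t)) := by
            refine mul_le_mul (mul_le_mul hRle b1' (by positivity) (by positivity)) b3''
              (by positivity) (by positivity)
        _ = C^3 * (amu' ^ t * (1/(1+amu'))^t) * ((1/(1+au))^s * (1/(1+au))) := by ring
        _ ≤ C^3 * 1 * ((1/(1+au))^s * (1/(1+au))) := by
            refine mul_le_mul_of_nonneg_right (mul_le_mul_of_nonneg_left hfrac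
              (by positivity)) (by positivity)
        _ = C^3 * X := by rw [mul_one, hX2]
  -- final assembly
  have h2' : 1/d2 ≤ C * (1/(1+au')) :=
    hb2.trans (mul_le_mul_of_nonneg_left (min_le_left _ _) hC0)
  have h4' : 1/d4 ≤ C * (1/(1+au')) :=
    hb4.trans (mul_le_mul_of_nonneg_left (min_le_left _ _) hC0)
  have hR0 : 0 ≤ ‖R‖ := norm_nonneg R
  calc ‖R‖ * (1 / (d1 * d2 * d3) + 1 / (d1 * d3 * d4))
      = (‖R‖ * (1/d1) * (1/d3)) * (1/d2)
        + (‖R‖ * (1/d1) * (1/d3)) * (1/d4) := by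
        field_simp
    _ ≤ (C^3 * X) * (C * (1/(1+au'))) + (C^3 * X) * (C * (1/(1+au'))) := by
        refine add_le_add (mul_le_mul key h2' (by positivity) (by positivity))
          (mul_le_mul key h4' (by positivity) (by positivity))
    _ = 2 * C^4 * X * (1/(1+au')) := by ring
    _ = 2 * C^4 * X * (1 + au') ^ (-(1:ℝ)) := by
        rw [Real.rpow_neg_one, one_div]
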